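/- arXiv:1603.05679 — 2 statements merged into one kernel-verified Lean document; each statement's English description precedes it below -/
import Mathlib

section
/- For integers n ≥ 3 and j with 2 ≤ j ≤ n, the quantity C(2n,j) - C(2n,j-2) is strictly greater than 4n. -/
lemma choose_mono_half (n a b : ℕ) (hab : a ≤ b) (hb : b ≤ n) :
    (2 * n).choose a ≤ (2 * n).choose b := by
  induction b with
  | zero => simp [Nat.le_zero.mp hab]
  | succ b ih =>
    rcases Nat.eq_or_lt_of_le hab with h | h
    · exact h ▸ le_refl _
    · have h1 : a ≤ b := by omega
      have h2 : b ≤ n := by omega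
      have h3 : b < (2 * n) / 2 := by omega
      exact le_trans (ih h1 h2) (Nat.choose_le_succ_of_lt_half_left h3)

lemma choose_ident (n k : ℕ) (hk : k + 2 ≤ 2 * n) :
    ((2 * n).choose (k + 2) : ℤ) * (k + 2) * (k + 1)
      = ((2 * n).choose k : ℤ) * (2 * n - k - 1) * (2 * n - k) := by
  have hk1 : k + 1 ≤ 2 * n := by omega
  have hk0 : k ≤ 2 * n := by omega
  have h1 := Nat.choose_succ_right_eq (2 * n) (k + 1)
  have h2 := Nat.choose_succ_right_eq (2 * n) k
  zify [hk1] at h1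
  zify [hk0] at h2
  linear_combination ((k : ℤ) + 1) * h1 + (2 * (n : ℤ) - k - 1) * h2

/-- For integers `n ≥ 3` and `2 ≤ j ≤ n`, one has `C(2n,j) - C(2n,j-2) > 4n`. -/
theorem stmt3 (n j : ℕ) (hn : 3 ≤ n) (hj : 2 ≤ j) (hjn : j ≤ n) :
    (4 * n : ℤ) < (Nat.choose (2 * n) j : ℤ) - Nat.choose (2 * n) (j - 2) := by
  obtain ⟨k, rfl⟩ : ∃ k, j = k + 2 := ⟨j - 2, by omega⟩
  simp only [Nat.add_sub_cancel]
  have hk : k + 2 ≤ 2 * n := by omega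
  have hid := choose_ident n k hk
  -- lower bound: A * (n - k - 1) ≥ (k+2)*(k+1)
  have hA : ((k : ℤ) + 2) * (k + 1) ≤ ((2 * n).choose k : ℤ) * (n - k - 1) := by
    have hnk : (1 : ℤ) ≤ (n : ℤ) - k - 1 := by
      have : k + 2 ≤ n := by omega
      omega
    rcases Nat.lt_or_ge k 2 with hk2 | hk2
    · interval_cases k
      · simp
        nlinarith [hnk]
      · simp
        nlinarith [hn]
    · have h2 : (2 * n).choose 2 ≤ (2 * n).choose k :=
        choose_mono_half n 2 k hk2 (by omega)
      have hc2n : (2 * n).choose 2 = n * (2 * n - 1) := by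
        rw [Nat.choose_two_right, show 2 * n * (2 * n - 1) = 2 * (n * (2 * n - 1)) by ring,
          Nat.mul_div_cancel_left _ (by norm_num)]
      have h3 : n * (2 * n - 1) ≤ (2 * n).choose k := hc2n ▸ h2
      have h2' : ((n : ℤ)) * (2 * (n:ℤ) - 1) ≤ ((2 * n).choose k : ℤ) := by
        zify [show 1 ≤ 2 * n by omega] at h3
        linarith [h3]
      have hkn : (k : ℤ) + 2 ≤ n := by exact_mod_cast (by omega : k + 2 ≤ n)
      nlinarith [hnk, h2', hkn, (Nat.cast_nonneg ((2 * n).choose k) : (0:ℤ) ≤ _)]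
  -- combine
  have hpos : (0 : ℤ) < ((k : ℤ) + 2) * (k + 1) := by positivity
  have key : ((k : ℤ) + 2) * (k + 1) * (((2 * n).choose (k + 2) : ℤ) - (2 * n).choose k)
      = ((2 * n).choose k : ℤ) * (2 * (2 * n + 1)) * (n - k - 1) := by
    linear_combination hid
  nlinarith [hA, key, hpos, (by exact_mod_cast hn : (3:ℤ) ≤ n)]
end

section
/- Let W₀ ∈ so(2n,2n) commute with every element in the image of the block-diagonal embedding of sp(n,ℝ) into so(2n,2n). Then W₀ has the form [[aI_n, 0, 0, bI_n], [0, aI_n, -bI_n, 0], [0, -cI_n, -aI_n, 0], [cI_n, 0, 0, -aI_n]] for some a, b, c ∈ ℝ. In particular, the centralizer of sp(n,ℝ) in so(2n,2n) is a 3-dimensional Lie algebra isomorphic to sl(2,ℝ) ≅ sp(1,ℝ). -/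
open Matrix

/-- Membership in the Lie algebra `sp(n,ℝ)`. -/
def IsSp (n : ℕ) (M : Matrix (Fin n ⊕ Fin n) (Fin n ⊕ Fin n) ℝ) : Prop :=
  Mᵀ * Matrix.fromBlocks 0 1 (-1) 0 + Matrix.fromBlocks 0 1 (-1) 0 * M = 0

/-- Membership in the Lie algebra `so(2n,2n)`. -/
def IsSo (n : ℕ)
    (M : Matrix ((Fin n ⊕ Fin n) ⊕ (Fin n ⊕ Fin n)) ((Fin n ⊕ Fin n) ⊕ (Fin n ⊕ Fin n)) ℝ) :
    Prop :=
  Mᵀ * Matrix.fromBlocks 0 1 1 0 + Matrix.fromBlocks 0 1 1 0 * M = 0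

/-- The block-diagonal embedding of `sp(n,ℝ)` into `so(2n,2n)`. -/
def phiSp (n : ℕ) (M : Matrix (Fin n ⊕ Fin n) (Fin n ⊕ Fin n) ℝ) :
    Matrix ((Fin n ⊕ Fin n) ⊕ (Fin n ⊕ Fin n)) ((Fin n ⊕ Fin n) ⊕ (Fin n ⊕ Fin n)) ℝ :=
  Matrix.fromBlocks M 0 0
    (Matrix.fromBlocks (-(M.toBlocks₁₁)ᵀ) (-(M.toBlocks₂₁)) (-(M.toBlocks₁₂)) (M.toBlocks₁₁))

/-- The matrix `[[aIₙ,0,0,bIₙ],[0,aIₙ,-bIₙ,0],[0,-cIₙ,-aIₙ,0],[cIₙ,0,0,-aIₙ]]`. -/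
def psiSl2 (n : ℕ) (a b c : ℝ) :
    Matrix ((Fin n ⊕ Fin n) ⊕ (Fin n ⊕ Fin n)) ((Fin n ⊕ Fin n) ⊕ (Fin n ⊕ Fin n)) ℝ :=
  Matrix.fromBlocks (a • (1 : Matrix (Fin n ⊕ Fin n) (Fin n ⊕ Fin n) ℝ))
    (Matrix.fromBlocks 0 (b • (1 : Matrix (Fin n) (Fin n) ℝ))
      (-(b • (1 : Matrix (Fin n) (Fin n) ℝ))) 0)
    (Matrix.fromBlocks 0 (-(c • (1 : Matrix (Fin n) (Fin n) ℝ)))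
      (c • (1 : Matrix (Fin n) (Fin n) ℝ)) 0)
    (-(a • (1 : Matrix (Fin n ⊕ Fin n) (Fin n ⊕ Fin n) ℝ)))

section Aux

variable {n : ℕ}

/-- The `2n × 2n` symplectic structure matrix `J₀ = [[0,1],[-1,0]]`. -/
abbrev J0 (n : ℕ) : Matrix (Fin n ⊕ Fin n) (Fin n ⊕ Fin n) ℝ := fromBlocks 0 1 (-1) 0

lemma J0_mul_J0 : J0 n * J0 n = -1 := by
  simp [J0, fromBlocks_multiply, ← fromBlocks_one, fromBlocks_neg]

lemma J0_transpose : (J0 n)ᵀ = -(J0 n) := by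
  simp [J0, fromBlocks_transpose, fromBlocks_neg]

lemma isSp_iff (M : Matrix (Fin n ⊕ Fin n) (Fin n ⊕ Fin n) ℝ) :
    IsSp n M ↔ Mᵀ * J0 n = -(J0 n * M) := by
  rw [IsSp]; constructor <;> intro h <;> linear_combination (norm := noncomm_ring) h

lemma sp_transpose_eq {M} (h : IsSp n M) : Mᵀ = J0 n * M * J0 n := by
  rw [isSp_iff] at h
  have := congrArg (fun X => X * J0 n) h
  simp only [Matrix.mul_assoc, J0_mul_J0, Matrix.neg_mul] at this
  rw [Matrix.mul_neg, Matrix.mul_one] at this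
  rw [← Matrix.mul_assoc] at this
  exact neg_injective this

lemma sp_mul_J0 {M} (h : IsSp n M) : M * J0 n = -(J0 n * Mᵀ) := by
  rw [sp_transpose_eq h]
  rw [← Matrix.mul_assoc, ← Matrix.mul_assoc, J0_mul_J0]
  simp [Matrix.neg_mul]

lemma isSp_transpose {M} (h : IsSp n M) : IsSp n Mᵀ := by
  rw [isSp_iff, transpose_transpose]
  have := sp_mul_J0 h
  linear_combination (norm := noncomm_ring) this

lemma stdT (i j : Fin n) : (Matrix.single i j (1:ℝ))ᵀ = Matrix.single j i 1 := by
  ext p q; simp [Matrix.single, and_comm]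

/-- A symmetric elementary matrix. -/
abbrev symE (i j : Fin n) : Matrix (Fin n) (Fin n) ℝ :=
  Matrix.single i j 1 + Matrix.single j i 1

lemma symE_transpose (i j : Fin n) : (symE i j)ᵀ = symE i j := by
  simp [symE, transpose_add, stdT, add_comm]

lemma isSp_MB (i j : Fin n) : IsSp n (fromBlocks 0 (symE i j) 0 0) := by
  unfold IsSp
  rw [fromBlocks_transpose]
  simp only [transpose_zero, symE_transpose]
  simp only [fromBlocks_multiply, Matrix.zero_mul, Matrix.mul_zero, Matrix.mul_one,
    Matrix.one_mul, Matrix.mul_neg, Matrix.neg_mul, add_zero, zero_add, ← fromBlocks_add]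
  rw [fromBlocks_add, show (0 : Matrix (Fin n ⊕ Fin n) (Fin n ⊕ Fin n) ℝ) = fromBlocks 0 0 0 0 from by simp]
  congr 1 <;> first | rfl | abel

lemma isSp_MC (i j : Fin n) : IsSp n (fromBlocks 0 0 (symE i j) 0) := by
  unfold IsSp
  rw [fromBlocks_transpose]
  simp only [transpose_zero, symE_transpose]
  simp only [fromBlocks_multiply, Matrix.zero_mul, Matrix.mul_zero, Matrix.mul_one,
    Matrix.one_mul, Matrix.mul_neg, Matrix.neg_mul, add_zero, zero_add, ← fromBlocks_add]
  rw [fromBlocks_add, show (0 : Matrix (Fin n ⊕ Fin n) (Fin n ⊕ Fin n) ℝ) = fromBlocks 0 0 0 0 from by simp]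
  congr 1 <;> first | rfl | abel

/-- The commutant of `sp(n,ℝ)` in `gl(2n,ℝ)` consists of scalar matrices. -/
lemma central (hn : 0 < n) (X : Matrix (Fin n ⊕ Fin n) (Fin n ⊕ Fin n) ℝ)
    (h : ∀ M, IsSp n M → M * X = X * M) : ∃ a : ℝ, X = a • 1 := by
  set P := X.toBlocks₁₁ with hP
  set Q := X.toBlocks₁₂ with hQ
  set R := X.toBlocks₂₁ with hRd
  set S := X.toBlocks₂₂ with hSd
  have hX : X = fromBlocks P Q R S := (fromBlocks_toBlocks X).symm
  have hB : ∀ i j : Fin n, symE i j * R = 0 ∧ symE i j * S = P * symE i j := by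
    intro i j
    have := h _ (isSp_MB i j)
    rw [hX, fromBlocks_multiply, fromBlocks_multiply] at this
    simp only [Matrix.zero_mul, Matrix.mul_zero, add_zero, zero_add] at this
    rw [fromBlocks_inj] at this
    exact ⟨this.1, this.2.1⟩
  have hC : ∀ i j : Fin n, symE i j * Q = 0 ∧ symE i j * P = S * symE i j := by
    intro i j
    have := h _ (isSp_MC i j)
    rw [hX, fromBlocks_multiply, fromBlocks_multiply] at this
    simp only [Matrix.zero_mul, Matrix.mul_zero, add_zero, zero_add] at this
    rw [fromBlocks_inj] at this
    exact ⟨this.2.2.2, this.2.2.1⟩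
  have hR0 : R = 0 := by
    ext p q
    have := congrFun (congrFun ((hB p p).1) p) q
    simp [add_mul, Matrix.add_apply] at this
    simpa using this
  have hQ0 : Q = 0 := by
    ext p q
    have := congrFun (congrFun ((hC p p).1) p) q
    simp [add_mul, Matrix.add_apply] at this
    simpa using this
  set i0 : Fin n := ⟨0, hn⟩
  refine ⟨P i0 i0, ?_⟩
  have key : ∀ i p q : Fin n, (S i q = if q = i then P i i else 0)
      ∧ (p ≠ i → P p i = 0) := by
    intro i p q
    have h1 := (hB i i).2
    constructor
    · have := congrFun (congrFun h1 i) q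
      simp [add_mul, mul_add, Matrix.add_apply] at this
      rcases eq_or_ne q i with rfl | hq
      · simp at this ⊢; linarith
      · simp [hq] at this ⊢; linarith
    · intro hp
      have := congrFun (congrFun h1 p) i
      simp [add_mul, mul_add, Matrix.add_apply, hp] at this
      linarith
  have diagc : ∀ i j : Fin n, P i i = P j j := by
    intro i j
    rcases eq_or_ne i j with rfl | hij
    · rfl
    have h1 := (hB i j).2
    have := congrFun (congrFun h1 i) j
    simp [add_mul, mul_add, Matrix.add_apply, hij, hij.symm] at this
    have hS1 : S j j = P j j := by simpa using (key j j j).1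
    rw [hS1] at this
    linarith
  have hPa : P = P i0 i0 • 1 := by
    ext p q
    rcases eq_or_ne p q with rfl | hpq
    · simp [diagc p i0]
    · simp [hpq, (key q p q).2 hpq]
  have hSa : S = P i0 i0 • 1 := by
    ext p q
    have := (key p p q).1
    rcases eq_or_ne q p with rfl | hq
    · simp [this, diagc q i0]
    · simp [this, hq, Ne.symm hq]
  rw [hX, hR0, hQ0, hPa, hSa, ← fromBlocks_one, fromBlocks_smul]
  simp

/-- Matrices anti-intertwining with all of `sp(n,ℝ)` are multiples of `J₀`. -/
lemma anti (hn : 0 < n) (X : Matrix (Fin n ⊕ Fin n) (Fin n ⊕ Fin n) ℝ)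
    (h : ∀ M, IsSp n M → M * X + X * Mᵀ = 0) : ∃ b : ℝ, X = b • J0 n := by
  obtain ⟨a, ha⟩ := central hn (X * J0 n) (fun M hM => by
    have h1 := h M hM
    have h2 := (isSp_iff M).mp hM
    calc M * (X * J0 n) = (M * X) * J0 n := by rw [Matrix.mul_assoc]
    _ = (-(X * Mᵀ)) * J0 n := by
        rw [show M * X = -(X * Mᵀ) from by linear_combination (norm := noncomm_ring) h1]
    _ = -(X * (Mᵀ * J0 n)) := by rw [Matrix.neg_mul, Matrix.mul_assoc]
    _ = X * (J0 n * M) := by rw [h2]; simp [Matrix.mul_neg]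
    _ = X * J0 n * M := by rw [Matrix.mul_assoc])
  refine ⟨-a, ?_⟩
  have : X * J0 n * J0 n = (a • 1) * J0 n := by rw [ha]
  rw [Matrix.mul_assoc, J0_mul_J0] at this
  simp only [Matrix.mul_neg, Matrix.mul_one, Matrix.smul_mul, Matrix.one_mul] at this
  calc X = -(-X) := by simp
  _ = -(a • J0 n) := by rw [this]
  _ = (-a) • J0 n := by simp

lemma psiSl2_blocks (a b c : ℝ) :
    psiSl2 n a b c = fromBlocks (a • 1) (b • J0 n) ((-c) • J0 n) (-(a • 1)) := by
  rw [psiSl2, J0, fromBlocks_smul, fromBlocks_smul]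
  norm_num

lemma phiSp_isSp {M} (h : IsSp n M) : phiSp n M = fromBlocks M 0 0 (-Mᵀ) := by
  have h2 := (isSp_iff M).mp h
  have hM : M = fromBlocks M.toBlocks₁₁ M.toBlocks₁₂ M.toBlocks₂₁ M.toBlocks₂₂ :=
    (fromBlocks_toBlocks M).symm
  rw [hM] at h2
  rw [fromBlocks_transpose, J0, fromBlocks_multiply, fromBlocks_multiply] at h2
  simp only [Matrix.mul_zero, Matrix.mul_one, Matrix.mul_neg, Matrix.zero_mul, Matrix.one_mul,
    Matrix.neg_mul, zero_add, add_zero, fromBlocks_neg] at h2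
  rw [fromBlocks_inj] at h2
  obtain ⟨e1, e2, e3, e4⟩ := h2
  have hC : M.toBlocks₂₁ᵀ = M.toBlocks₂₁ := neg_injective e1
  have hB : M.toBlocks₁₂ᵀ = M.toBlocks₁₂ := by simpa using e4
  have hD : M.toBlocks₂₂ = -M.toBlocks₁₁ᵀ := by rw [e2, neg_neg]
  rw [phiSp, fromBlocks_inj]
  refine ⟨rfl, rfl, rfl, ?_⟩
  conv_rhs => rw [hM]
  rw [fromBlocks_transpose, fromBlocks_neg, fromBlocks_inj]
  exact ⟨rfl, by rw [hC], by rw [hB], by rw [hD]; simp⟩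

end Aux

/-- Any `W₀ ∈ so(2n,2n)` commuting with the image of the block-diagonal embedding of
`sp(n,ℝ)` has the form `[[aIₙ,0,0,bIₙ],[0,aIₙ,-bIₙ,0],[0,-cIₙ,-aIₙ,0],[cIₙ,0,0,-aIₙ]]`
for some `a, b, c ∈ ℝ`.  In particular the centralizer of `sp(n,ℝ)` in `so(2n,2n)` is
the 3-dimensional Lie algebra parametrized by `psiSl2`, isomorphic to
`sl(2,ℝ) ≅ sp(1,ℝ)` via `[[a,b],[c,-a]] ↦ psiSl2 n a b c`. -/
theorem stmt13 (n : ℕ) (hn : 3 ≤ n) :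
    (∀ W₀, IsSo n W₀ → (∀ M, IsSp n M → phiSp n M * W₀ = W₀ * phiSp n M) →
      ∃ a b c : ℝ, W₀ = psiSl2 n a b c) ∧
    (∀ a b c : ℝ, IsSo n (psiSl2 n a b c) ∧
      ∀ M, IsSp n M → phiSp n M * psiSl2 n a b c = psiSl2 n a b c * phiSp n M) ∧
    Function.Injective (fun x : ℝ × ℝ × ℝ => psiSl2 n x.1 x.2.1 x.2.2) ∧
    (∀ a b c a' b' c' : ℝ,
      psiSl2 n a b c * psiSl2 n a' b' c' - psiSl2 n a' b' c' * psiSl2 n a b c =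
        psiSl2 n (b * c' - c * b') (2 * (a * b' - a' * b)) (2 * (c * a' - c' * a))) := by
  have hn0 : 0 < n := by omega
  refine ⟨?_, ?_, ?_, ?_⟩
  · -- Part 1: classification
    intro W₀ hso hcomm
    set W11 := W₀.toBlocks₁₁ with h11
    set W12 := W₀.toBlocks₁₂ with h12
    set W21 := W₀.toBlocks₂₁ with h21
    set W22 := W₀.toBlocks₂₂ with h22
    have hW : W₀ = fromBlocks W11 W12 W21 W22 := (fromBlocks_toBlocks W₀).symm
    have hblk : ∀ M, IsSp n M → M * W11 = W11 * M ∧ M * W12 = W12 * (-Mᵀ) ∧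
        (-Mᵀ) * W21 = W21 * M ∧ (-Mᵀ) * W22 = W22 * (-Mᵀ) := by
      intro M hM
      have := hcomm M hM
      rw [phiSp_isSp hM, hW, fromBlocks_multiply, fromBlocks_multiply] at this
      simp only [Matrix.zero_mul, Matrix.mul_zero, add_zero, zero_add] at this
      rw [fromBlocks_inj] at this
      exact this
    obtain ⟨a, ha⟩ := central hn0 W11 (fun M hM => (hblk M hM).1)
    obtain ⟨b, hb⟩ := anti hn0 W12 (fun M hM => by
      have := (hblk M hM).2.1
      linear_combination (norm := noncomm_ring) this)
    obtain ⟨c', hc⟩ := anti hn0 W21 (fun M hM => by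
      have h3 := (hblk Mᵀ (isSp_transpose hM)).2.2.1
      rw [transpose_transpose] at h3
      rw [← h3, Matrix.neg_mul]
      simp)
    have hW22 : W22 = -(a • 1) := by
      have hs := hso
      rw [IsSo, hW, fromBlocks_transpose, fromBlocks_multiply, fromBlocks_multiply] at hs
      simp only [Matrix.zero_mul, Matrix.mul_zero, Matrix.mul_one, Matrix.one_mul,
        add_zero, zero_add] at hs
      rw [fromBlocks_add, show (0 : Matrix ((Fin n ⊕ Fin n) ⊕ (Fin n ⊕ Fin n))
        ((Fin n ⊕ Fin n) ⊕ (Fin n ⊕ Fin n)) ℝ) = fromBlocks 0 0 0 0 from by simp,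
        fromBlocks_inj] at hs
      have := hs.2.1
      have h1 : W22 = -W11ᵀ := by linear_combination (norm := noncomm_ring) this
      rw [h1, ha]
      simp
    refine ⟨a, b, -c', ?_⟩
    rw [hW, ha, hb, hc, hW22, psiSl2_blocks, neg_neg]
  · -- Part 2
    intro a b c
    constructor
    · rw [IsSo, psiSl2_blocks, fromBlocks_transpose, fromBlocks_multiply, fromBlocks_multiply]
      simp only [transpose_smul, transpose_one, transpose_neg, J0_transpose,
        Matrix.zero_mul, Matrix.mul_zero, Matrix.mul_one, Matrix.one_mul,
        add_zero, zero_add, smul_neg, neg_smul, neg_neg]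
      rw [fromBlocks_add, show (0 : Matrix ((Fin n ⊕ Fin n) ⊕ (Fin n ⊕ Fin n))
        ((Fin n ⊕ Fin n) ⊕ (Fin n ⊕ Fin n)) ℝ) = fromBlocks 0 0 0 0 from by simp,
        fromBlocks_inj]
      refine ⟨by abel, by abel, by abel, by abel⟩
    · intro M hM
      rw [phiSp_isSp hM, psiSl2_blocks, fromBlocks_multiply, fromBlocks_multiply,
        fromBlocks_inj]
      have hm1 := sp_mul_J0 hM
      have hm2 := (isSp_iff M).mp hM
      refine ⟨?_, ?_, ?_, ?_⟩
      · simp [Matrix.mul_smul, Matrix.smul_mul]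
      · simp [Matrix.mul_smul, Matrix.smul_mul, Matrix.mul_neg, Matrix.neg_mul, hm1]
      · simp [Matrix.mul_smul, Matrix.smul_mul, Matrix.mul_neg, Matrix.neg_mul, hm2]
      · simp [Matrix.mul_smul, Matrix.smul_mul, Matrix.mul_neg, Matrix.neg_mul]
  · -- Part 3: injectivity
    intro x y hxy
    obtain ⟨a, b, c⟩ := x
    obtain ⟨a', b', c'⟩ := y
    simp only at hxy
    set i0 : Fin n := ⟨0, hn0⟩
    have ha := congrFun (congrFun hxy (Sum.inl (Sum.inl i0))) (Sum.inl (Sum.inl i0))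
    have hb := congrFun (congrFun hxy (Sum.inl (Sum.inl i0))) (Sum.inr (Sum.inr i0))
    have hc := congrFun (congrFun hxy (Sum.inr (Sum.inr i0))) (Sum.inl (Sum.inl i0))
    simp [psiSl2, fromBlocks, one_apply] at ha hb hc
    exact Prod.ext ha (Prod.ext hb hc)
  · -- Part 4: bracket
    intro a b c a' b' c'
    rw [psiSl2_blocks, psiSl2_blocks, psiSl2_blocks, fromBlocks_multiply, fromBlocks_multiply,
      sub_eq_add_neg, fromBlocks_neg, fromBlocks_add, fromBlocks_inj]
    refine ⟨?_, ?_, ?_, ?_⟩ <;>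
      simp only [Matrix.smul_mul, Matrix.mul_smul, Matrix.mul_one, Matrix.one_mul,
        Matrix.neg_mul, Matrix.mul_neg, smul_smul, smul_neg, neg_smul, neg_neg, neg_add_rev,
        J0_mul_J0] <;>
      module
end
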